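/- Let 0 < β < 1 and let σ be a weight in A_∞^β. Then σ satisfies a reverse Hölder inequality on F_β: there exist ε > 0 and a constant C such that (|Q|^{-1} ∫_Q σ^{1+ε})^{1/(1+ε)} ≤ C·|Q|^{-1} ∫_Q σ for every cube Q ∈ F_β. -/

import Mathlib

open MeasureTheory Metric Set
open scoped ENNReal

noncomputable section

/-- The cube `Q(x,l)` with center `x` and half side length `l`, i.e. the closed
ball of radius `l` in the sup metric `d_∞` on `Fin n → ℝ`. -/
def Cube {n : ℕ} (x : Fin n → ℝ) (l : ℝ) : Set (Fin n → ℝ) :=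
  Metric.closedBall x l

/-- `Q(x,l)` belongs to the family `F_β` of cubes well inside `Ω`. -/
def MemF {n : ℕ} (Ω : Set (Fin n → ℝ)) (β : ℝ) (x : Fin n → ℝ) (l : ℝ) : Prop :=
  x ∈ Ω ∧ 0 < l ∧ l < β * Metric.infDist x Ωᶜ

/-- `w(E) = ∫_E w dx` for a weight `w`. -/
def wMeas {n : ℕ} (w : (Fin n → ℝ) → ℝ) (E : Set (Fin n → ℝ)) : ℝ≥0∞ :=
  ∫⁻ y in E, ENNReal.ofReal (w y)

/-- The average `|Q|⁻¹ ∫_Q |f|`. -/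
def avgI {n : ℕ} (f : (Fin n → ℝ) → ℝ) (Q : Set (Fin n → ℝ)) : ℝ≥0∞ :=
  (volume Q)⁻¹ * ∫⁻ y in Q, ENNReal.ofReal |f y|

/-- The local (uncentered) maximal function `M_β f`. -/
def locMax {n : ℕ} (Ω : Set (Fin n → ℝ)) (β : ℝ) (f : (Fin n → ℝ) → ℝ)
    (x : Fin n → ℝ) : ℝ≥0∞ :=
  ⨆ (c : Fin n → ℝ) (l : ℝ) (_ : MemF Ω β c l) (_ : x ∈ Cube c l), avgI f (Cube c l)

/-- The centered local maximal function `M_β^c f`. -/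
def locMaxC {n : ℕ} (Ω : Set (Fin n → ℝ)) (β : ℝ) (f : (Fin n → ℝ) → ℝ)
    (x : Fin n → ℝ) : ℝ≥0∞ :=
  ⨆ (l : ℝ) (_ : MemF Ω β x l), avgI f (Cube x l)

/-- A weight: a nonnegative (measurable) locally integrable function on `Ω`. -/
def IsWeight {n : ℕ} (Ω : Set (Fin n → ℝ)) (w : (Fin n → ℝ) → ℝ) : Prop :=
  (∀ x, 0 ≤ w x) ∧ Measurable w ∧ LocallyIntegrableOn w Ω

/-- `σ = v^{1-p'} = v^{-1/(p-1)}`. -/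
def sigW {n : ℕ} (v : (Fin n → ℝ) → ℝ) (p : ℝ) : (Fin n → ℝ) → ℝ :=
  fun y => v y ^ (-(1 / (p - 1)))

/-- The class `A_{p,q}^β`: `(u(Q)/|Q|)^{p/q} (σ(Q)/|Q|)^{p-1} ≤ C` for `Q ∈ F_β`. -/
def Apq {n : ℕ} (Ω : Set (Fin n → ℝ)) (β p q : ℝ) (u v : (Fin n → ℝ) → ℝ) : Prop :=
  ∃ C : ℝ≥0∞, C ≠ ⊤ ∧ ∀ x l, MemF Ω β x l →
    (wMeas u (Cube x l) / volume (Cube x l)) ^ (p / q) *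
      (wMeas (sigW v p) (Cube x l) / volume (Cube x l)) ^ (p - 1) ≤ C

/-- The class `D_β`: `w(2Q) ≤ C w(Q) < ∞` for all `Q ∈ F_β` with `2Q ∈ F_β`. -/
def Dbeta {n : ℕ} (Ω : Set (Fin n → ℝ)) (β : ℝ) (w : (Fin n → ℝ) → ℝ) : Prop :=
  ∃ C : ℝ≥0∞, C ≠ ⊤ ∧ ∀ x l, MemF Ω β x l → MemF Ω β x (2 * l) →
    wMeas w (Cube x (2 * l)) ≤ C * wMeas w (Cube x l) ∧ wMeas w (Cube x l) < ⊤

/-- The class `A_∞^β`: `w(E)/w(Q) ≤ c (|E|/|Q|)^δ` for measurable `E ⊆ Q ∈ F_β`. -/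
def AinfB {n : ℕ} (Ω : Set (Fin n → ℝ)) (β : ℝ) (w : (Fin n → ℝ) → ℝ) : Prop :=
  ∃ c δ : ℝ, 0 < c ∧ 0 < δ ∧ ∀ x l, MemF Ω β x l → ∀ E : Set (Fin n → ℝ),
    MeasurableSet E → E ⊆ Cube x l →
    wMeas w E ≤ ENNReal.ofReal c * (volume E / volume (Cube x l)) ^ δ * wMeas w (Cube x l)

/-- `M_β : L^p(v) → L^q(u)` is bounded. -/
def MaxBdd {n : ℕ} (Ω : Set (Fin n → ℝ)) (β p q : ℝ) (u v : (Fin n → ℝ) → ℝ) : Prop :=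
  ∃ C : ℝ≥0∞, C ≠ ⊤ ∧ ∀ f : (Fin n → ℝ) → ℝ,
    (∫⁻ x in Ω, (locMax Ω β f x) ^ q * ENNReal.ofReal (u x)) ^ (1 / q)
      ≤ C * (∫⁻ x in Ω, ENNReal.ofReal |f x| ^ p * ENNReal.ofReal (v x)) ^ (1 / p)

/-- `M_β^c : L^p(v) → L^q(u)` is bounded. -/
def MaxCBdd {n : ℕ} (Ω : Set (Fin n → ℝ)) (β p q : ℝ) (u v : (Fin n → ℝ) → ℝ) : Prop :=
  ∃ C : ℝ≥0∞, C ≠ ⊤ ∧ ∀ f : (Fin n → ℝ) → ℝ,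
    (∫⁻ x in Ω, (locMaxC Ω β f x) ^ q * ENNReal.ofReal (u x)) ^ (1 / q)
      ≤ C * (∫⁻ x in Ω, ENNReal.ofReal |f x| ^ p * ENNReal.ofReal (v x)) ^ (1 / p)

/-- The cloud `N_β(Q)` of the cube `Q = Q(x,l)`. -/
def cloud {n : ℕ} (Ω : Set (Fin n → ℝ)) (β : ℝ) (x : Fin n → ℝ) (l : ℝ) :
    Set (Fin n → ℝ) :=
  ⋃ (c : Fin n → ℝ) (r : ℝ) (_ : MemF Ω β c r)
    (_ : (Cube c r ∩ Cube x l).Nonempty), Cube c r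

/-- The center of the usual dyadic cube of side `2^(k+1)` indexed by `z`. -/
def dyCenter {n : ℕ} (k : ℤ) (z : Fin n → ℤ) : Fin n → ℝ :=
  fun i => (2 * (z i : ℝ) + 1) * (2:ℝ) ^ k

/-- The usual (half-open) dyadic cube of side `2^(k+1)` indexed by `z`;
its center is `dyCenter k z` and its half side length is `2^k`. -/
def dyCube {n : ℕ} (k : ℤ) (z : Fin n → ℤ) : Set (Fin n → ℝ) :=
  Set.univ.pi fun i => Ico ((z i : ℝ) * 2 ^ (k + 1)) (((z i : ℝ) + 1) * 2 ^ (k + 1))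

/-- `Q(x,l)` is a usual dyadic cube of `ℝ^n`. -/
def IsDyadic {n : ℕ} (x : Fin n → ℝ) (l : ℝ) : Prop :=
  ∃ (k : ℤ) (z : Fin n → ℤ), l = (2:ℝ) ^ k ∧ x = dyCenter k z

/-- `W` is a covering `W_t` of `Ω` as in the covering lemma: a covering of `Ω`
by pairwise disjoint dyadic cubes `R ∈ F_β` with `10R ∈ F_β` and
`2^{-t-3} d(x_R,Ω^c) ≤ l_R ≤ 2^{-t-1} d(x_R,Ω^c)`, and such that at most `M`
cubes of `W` meet the cloud of any `Q ∈ F_β` with `10Q ∉ F_β`. -/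
def IsWt {n : ℕ} (Ω : Set (Fin n → ℝ)) (β : ℝ) (t : ℕ)
    (W : Set (ℤ × (Fin n → ℤ))) : Prop :=
  (Ω ⊆ ⋃ q ∈ W, dyCube q.1 q.2) ∧
  (W.PairwiseDisjoint fun q => dyCube q.1 q.2) ∧
  (∀ q ∈ W, MemF Ω β (dyCenter q.1 q.2) ((2:ℝ) ^ q.1) ∧
    MemF Ω β (dyCenter q.1 q.2) (10 * (2:ℝ) ^ q.1) ∧
    (2:ℝ) ^ (-(t:ℤ) - 3) * Metric.infDist (dyCenter q.1 q.2) Ωᶜ ≤ (2:ℝ) ^ q.1 ∧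
    (2:ℝ) ^ q.1 ≤ (2:ℝ) ^ (-(t:ℤ) - 1) * Metric.infDist (dyCenter q.1 q.2) Ωᶜ) ∧
  (∃ M : ℕ, ∀ x l, MemF Ω β x l → ¬ MemF Ω β x (10 * l) →
    {q ∈ W | (dyCube q.1 q.2 ∩ cloud Ω β x l).Nonempty}.Finite ∧
    {q ∈ W | (dyCube q.1 q.2 ∩ cloud Ω β x l).Nonempty}.ncard ≤ M)

/-- `W_{t,Q}`: the union of the cubes of `W` meeting the cloud of `Q = Q(x,l)`. -/
def WtQ {n : ℕ} (Ω : Set (Fin n → ℝ)) (β : ℝ) (W : Set (ℤ × (Fin n → ℤ)))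
    (x : Fin n → ℝ) (l : ℝ) : Set (Fin n → ℝ) :=
  ⋃ q ∈ {q ∈ W | (dyCube q.1 q.2 ∩ cloud Ω β x l).Nonempty}, dyCube q.1 q.2

/-- Lemma 4.2: a weight `σ ∈ A_∞^β` satisfies a reverse
Hölder inequality on the cubes of `F_β`. -/
theorem AinfB_reverse_holder {n : ℕ} (Ω : Set (Fin n → ℝ))
    (hΩo : IsOpen Ω) (hΩne : Ω.Nonempty) (hΩpr : Ω ≠ Set.univ)
    (β : ℝ) (hβ0 : 0 < β) (hβ1 : β < 1)
    (σ : (Fin n → ℝ) → ℝ) (hσw : IsWeight Ω σ) (hσA : AinfB Ω β σ) :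
    ∃ (ε : ℝ) (C : ℝ≥0∞), 0 < ε ∧ C ≠ ⊤ ∧ ∀ x l, MemF Ω β x l →
      ((volume (Cube x l))⁻¹ *
          ∫⁻ y in Cube x l, ENNReal.ofReal (σ y) ^ (1 + ε)) ^ (1 / (1 + ε))
        ≤ C * ((volume (Cube x l))⁻¹ * ∫⁻ y in Cube x l, ENNReal.ofReal (σ y)) := by
  classical
  obtain ⟨hσ0, hσm, hσl⟩ := hσw
  obtain ⟨c, δ₀, hc, hδ₀, hA₀⟩ := hσA
  simp only [wMeas] at hA₀
  set δ : ℝ := min δ₀ (1/2) with hδdef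
  have hδ : 0 < δ := lt_min hδ₀ (by norm_num)
  have hδle : δ ≤ 1/2 := min_le_right _ _
  have h1δ : 0 < 1 - δ := by linarith
  set r : ℝ := 1 / (1 - δ) with hrdef
  have hr1 : 1 < r := by
    rw [hrdef, lt_div_iff₀ h1δ]; linarith
  have hr0 : 0 < r := by linarith
  have hrδ : r * (1 - δ) = 1 := by rw [hrdef]; field_simp
  have hδr : δ * r = r - 1 := by linear_combination -hrδ
  set ε : ℝ := δ / 2 with hεdef
  have hε : 0 < ε := by positivity
  set p : ℝ := 1 + ε with hpdef
  have hp1 : 1 < p := by rw [hpdef]; linarith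
  have hp0 : 0 < p := by linarith
  have hpr : p < r := by
    have h1 : p * (1 - δ) < 1 := by rw [hpdef, hεdef]; nlinarith
    have h2 : p * (1 - δ) * r < 1 * r := mul_lt_mul_of_pos_right h1 hr0
    have h3 : p * (1 - δ) * r = p := by rw [mul_assoc, mul_comm (1-δ) r, hrδ, mul_one]
    rw [h3, one_mul] at h2; exact h2
  have hrp : 0 < r - p := by linarith
  set C0 : ℝ≥0∞ := ENNReal.ofReal p *
    (ENNReal.ofReal (1/p) + ENNReal.ofReal c ^ r * ENNReal.ofReal (1/(r-p))) with hC0def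
  have hC0top : C0 ≠ ⊤ := by
    rw [hC0def]
    exact ENNReal.mul_ne_top ENNReal.ofReal_ne_top
      (ENNReal.add_ne_top.2 ⟨ENNReal.ofReal_ne_top,
        ENNReal.mul_ne_top (ENNReal.rpow_ne_top_of_nonneg hr0.le ENNReal.ofReal_ne_top)
          ENNReal.ofReal_ne_top⟩)
  refine ⟨ε, C0 ^ (1/p), hε, ENNReal.rpow_ne_top_of_nonneg (by positivity) hC0top, ?_⟩
  intro x l hQ
  simp only [← hpdef]
  obtain ⟨hxΩ, hl, hlβ⟩ := hQ
  obtain ⟨z, hz⟩ := (Set.ne_univ_iff_exists_notMem _).mp hΩpr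
  have hΩcne : Ωᶜ.Nonempty := ⟨z, hz⟩
  have hd : 0 < Metric.infDist x Ωᶜ :=
    (hΩo.isClosed_compl.notMem_iff_infDist_pos hΩcne).1 (by simpa using hxΩ)
  have hQsub : Cube x l ⊆ Ω := by
    intro y hy
    by_contra hyΩ
    have h0 : Metric.infDist y Ωᶜ = 0 := Metric.infDist_zero_of_mem (by simpa using hyΩ)
    have h1 : Metric.infDist x Ωᶜ ≤ Metric.infDist y Ωᶜ + dist x y :=
      Metric.infDist_le_infDist_add_dist
    have hxy : dist x y ≤ l := by rw [dist_comm]; exact hy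
    nlinarith [hd]
  have hQm : MeasurableSet (Cube x l) := measurableSet_closedBall
  set V := volume (Cube x l) with hVdef
  have hV0 : V ≠ 0 :=
    ((Metric.measure_ball_pos volume x hl).trans_le
      (measure_mono Metric.ball_subset_closedBall)).ne'
  have hVtop : V ≠ ⊤ := (isCompact_closedBall x l).measure_lt_top.ne
  have hIntσ : IntegrableOn σ (Cube x l) :=
    hσl.integrableOn_compact_subset hQsub (isCompact_closedBall x l)
  set w := ∫⁻ y in Cube x l, ENNReal.ofReal (σ y) with hwdef
  have hwtop : w ≠ ⊤ := hIntσ.lintegral_lt_top.ne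
  have hAQ : ∀ E : Set (Fin n → ℝ), MeasurableSet E → E ⊆ Cube x l →
      (∫⁻ y in E, ENNReal.ofReal (σ y)) ≤ ENNReal.ofReal c * (volume E / V) ^ δ * w := by
    intro E hEm hEQ
    have h1 := hA₀ x l ⟨hxΩ, hl, hlβ⟩ E hEm hEQ
    have hle1 : volume E / V ≤ 1 :=
      ENNReal.div_le_of_le_mul (by rw [one_mul]; exact measure_mono hEQ)
    have h2 : (volume E / V) ^ δ₀ ≤ (volume E / V) ^ δ :=
      ENNReal.rpow_le_rpow_of_exponent_ge hle1 (min_le_left _ _)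
    exact h1.trans (by gcongr)
  rcases eq_or_ne w 0 with hw0 | hw0
  · have hae : (fun y => ENNReal.ofReal (σ y)) =ᵐ[volume.restrict (Cube x l)] 0 :=
      (lintegral_eq_zero_iff hσm.ennreal_ofReal).1 hw0
    have hz2 : ∫⁻ y in Cube x l, ENNReal.ofReal (σ y) ^ p = 0 := by
      rw [lintegral_eq_zero_iff (hσm.ennreal_ofReal.pow_const p)]
      filter_upwards [hae] with y hy
      simp only [Pi.zero_apply] at hy ⊢
      rw [hy, ENNReal.zero_rpow_of_pos hp0]
    rw [hz2, mul_zero, ENNReal.zero_rpow_of_pos (by positivity)]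
    exact bot_le
  -- main case
  set A := w / V with hAdef
  have hA0 : A ≠ 0 := by
    simp only [hAdef, ne_eq, ENNReal.div_eq_zero_iff, not_or]
    exact ⟨hw0, hVtop⟩
  have hAtop : A ≠ ⊤ := (ENNReal.div_lt_top hwtop hV0).ne
  set a := A.toReal with hadef
  have ha : 0 < a := ENNReal.toReal_pos hA0 hAtop
  have hofa : ENNReal.ofReal a = A := ENNReal.ofReal_toReal hAtop
  set B : ℝ≥0∞ := ENNReal.ofReal c * w / V ^ δ with hBdef
  have hBtop : B ≠ ⊤ := by
    rw [hBdef]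
    exact (ENNReal.div_lt_top (ENNReal.mul_ne_top ENNReal.ofReal_ne_top hwtop)
      (by simp [ENNReal.rpow_eq_zero_iff, hV0, hVtop, hδ, hδ.le])).ne
  -- level set estimate
  have hlev : ∀ t : ℝ, 0 < t →
      volume ({y | t ≤ σ y} ∩ Cube x l) ≤ (B / ENNReal.ofReal t) ^ r := by
    intro t ht
    set E := {y | t ≤ σ y} ∩ Cube x l with hE
    have hEm : MeasurableSet E := (measurableSet_le measurable_const hσm).inter hQm
    have hEQ : E ⊆ Cube x l := Set.inter_subset_right
    set v := volume E with hv
    rcases eq_or_ne v 0 with h0 | h0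
    · rw [h0]; exact bot_le
    have hvtop : v ≠ ⊤ := ((measure_mono hEQ).trans_lt hVtop.lt_top).ne
    have step1 : ENNReal.ofReal t * v ≤ ∫⁻ y in E, ENNReal.ofReal (σ y) := by
      rw [← setLIntegral_const E (ENNReal.ofReal t)]
      exact setLIntegral_mono hσm.ennreal_ofReal fun y hy => ENNReal.ofReal_le_ofReal hy.1
    have step2 : (∫⁻ y in E, ENNReal.ofReal (σ y)) ≤ B * v ^ δ := by
      refine (hAQ E hEm hEQ).trans_eq ?_
      rw [hBdef, ENNReal.div_rpow_of_nonneg _ _ hδ.le]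
      rw [div_eq_mul_inv, div_eq_mul_inv]
      ring
    have hvδ0 : v ^ δ ≠ 0 := by
      simp [ENNReal.rpow_eq_zero_iff, h0, hvtop, hδ, not_lt.2 hδ.le]
    have hvδt : v ^ δ ≠ ⊤ := ENNReal.rpow_ne_top_of_nonneg hδ.le hvtop
    have key : ENNReal.ofReal t * v ^ (1 - δ) ≤ B := by
      have h3 : ENNReal.ofReal t * v ^ (1-δ) * v ^ δ ≤ B * v ^ δ := by
        calc ENNReal.ofReal t * v ^ (1-δ) * v ^ δ = ENNReal.ofReal t * v := by
              rw [mul_assoc, ← ENNReal.rpow_add _ _ h0 hvtop]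
              norm_num
          _ ≤ B * v ^ δ := step1.trans step2
      exact (ENNReal.mul_le_mul_iff_left hvδ0 hvδt).1 h3
    have h4 : v ^ (1-δ) ≤ B / ENNReal.ofReal t := by
      rw [ENNReal.le_div_iff_mul_le (Or.inl (by simp [ht, ht.le])) (Or.inl ENNReal.ofReal_ne_top)]
      rw [mul_comm]; exact key
    calc v = (v ^ (1-δ)) ^ r := by
          rw [← ENNReal.rpow_mul, show (1-δ) * r = 1 by linarith [hrδ], ENNReal.rpow_one]
      _ ≤ (B / ENNReal.ofReal t) ^ r := ENNReal.rpow_le_rpow h4 hr0.le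
  -- layer cake
  have hg_intble : ∀ t > (0:ℝ), IntervalIntegrable (fun s => p * s ^ (p-1)) volume 0 t :=
    fun t _ => (intervalIntegral.intervalIntegrable_rpow' (by linarith)).const_mul p
  have hg_nn : ∀ᵐ s ∂(volume.restrict (Ioi (0:ℝ))), 0 ≤ p * s ^ (p-1) := by
    refine (ae_restrict_iff' measurableSet_Ioi).2 (ae_of_all _ fun s hs => ?_)
    have : (0:ℝ) < s := hs
    positivity
  have hcake := lintegral_comp_eq_lintegral_meas_le_mul (volume.restrict (Cube x l))
      (ae_of_all _ hσ0) hσm.aemeasurable hg_intble hg_nn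
  have hLHS : ∫⁻ y in Cube x l, ENNReal.ofReal (σ y) ^ p
      = ∫⁻ t in Ioi (0:ℝ), volume ({y | t ≤ σ y} ∩ Cube x l) * ENNReal.ofReal (p * t ^ (p-1)) := by
    calc ∫⁻ y in Cube x l, ENNReal.ofReal (σ y) ^ p
        = ∫⁻ y in Cube x l, ENNReal.ofReal (∫ t in (0:ℝ)..σ y, p * t ^ (p-1)) := by
          refine lintegral_congr fun y => ?_
          rw [ENNReal.ofReal_rpow_of_nonneg (hσ0 y) hp0.le]
          congr 1
          rw [intervalIntegral.integral_const_mul, integral_rpow (Or.inl (by linarith))]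
          rw [Real.zero_rpow (by linarith : p - 1 + 1 ≠ 0), show p - 1 + 1 = p by ring]
          field_simp
          rw [sub_zero]
      _ = ∫⁻ t in Ioi (0:ℝ), (volume.restrict (Cube x l)) {y | t ≤ σ y}
            * ENNReal.ofReal (p * t ^ (p-1)) := hcake
      _ = ∫⁻ t in Ioi (0:ℝ), volume ({y | t ≤ σ y} ∩ Cube x l)
            * ENNReal.ofReal (p * t ^ (p-1)) := by
          simp only [Measure.restrict_apply' hQm]
  set g : ℝ → ℝ≥0∞ :=
    fun t => volume ({y | t ≤ σ y} ∩ Cube x l) * ENNReal.ofReal (p * t ^ (p-1)) with hgdef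
  have hsplit : ∫⁻ t in Ioi (0:ℝ), g t = (∫⁻ t in Ioc 0 a, g t) + ∫⁻ t in Ioi a, g t := by
    rw [← Ioc_union_Ioi_eq_Ioi ha.le, lintegral_union measurableSet_Ioi Ioc_disjoint_Ioi_same]
  -- piece 1
  have hJ1 : ∫⁻ t in Ioc (0:ℝ) a, ENNReal.ofReal (t ^ (p-1)) = ENNReal.ofReal (a ^ p / p) := by
    have hint : IntegrableOn (fun t : ℝ => t ^ (p-1)) (Ioc 0 a) := by
      have h := intervalIntegral.intervalIntegrable_rpow' (a := 0) (b := a)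
        (show (-1:ℝ) < p - 1 by linarith)
      rwa [intervalIntegrable_iff_integrableOn_Ioc_of_le ha.le] at h
    rw [← MeasureTheory.ofReal_integral_eq_lintegral_ofReal hint
      ((ae_restrict_iff' measurableSet_Ioc).2
        (ae_of_all _ fun t htt => Real.rpow_nonneg htt.1.le _))]
    congr 1
    rw [← intervalIntegral.integral_of_le ha.le, integral_rpow (Or.inl (by linarith))]
    rw [Real.zero_rpow (by linarith : p - 1 + 1 ≠ 0), show p - 1 + 1 = p by ring]
    ring
  have hP1 : (∫⁻ t in Ioc (0:ℝ) a, g t) ≤ ENNReal.ofReal p * ENNReal.ofReal (1/p) * (A ^ p * V) := by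
    have hb : (∫⁻ t in Ioc (0:ℝ) a, g t)
        ≤ ∫⁻ t in Ioc (0:ℝ) a, (V * ENNReal.ofReal p) * ENNReal.ofReal (t ^ (p-1)) := by
      refine lintegral_mono fun t => ?_
      simp only [hgdef]
      rw [ENNReal.ofReal_mul hp0.le, mul_assoc]
      exact mul_le_mul' (measure_mono Set.inter_subset_right) le_rfl
    refine hb.trans ?_
    rw [lintegral_const_mul' _ _ (ENNReal.mul_ne_top hVtop ENNReal.ofReal_ne_top), hJ1]
    have : ENNReal.ofReal (a ^ p / p) = A ^ p * ENNReal.ofReal (1/p) := by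
      rw [div_eq_mul_inv, ← one_div, ENNReal.ofReal_mul (by positivity),
        ← ENNReal.ofReal_rpow_of_nonneg ha.le hp0.le, hofa]
    rw [this]
    ring_nf
    exact le_refl _
  -- piece 2
  have hJ2 : ∫⁻ t in Ioi a, ENNReal.ofReal (t ^ (p-1-r)) = ENNReal.ofReal (a ^ (p-r) / (r-p)) := by
    have hlt : p - 1 - r < -1 := by linarith
    have hint : IntegrableOn (fun t : ℝ => t ^ (p-1-r)) (Ioi a) :=
      integrableOn_Ioi_rpow_of_lt hlt ha
    rw [← MeasureTheory.ofReal_integral_eq_lintegral_ofReal hint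
      ((ae_restrict_iff' measurableSet_Ioi).2
        (ae_of_all _ fun t htt => Real.rpow_nonneg (ha.trans htt).le _))]
    congr 1
    rw [integral_Ioi_rpow_of_lt hlt ha, show p - 1 - r + 1 = p - r by ring]
    rw [show r - p = -(p - r) by ring, div_neg, neg_div]
  have hP2 : (∫⁻ t in Ioi a, g t)
      ≤ ENNReal.ofReal p * (B ^ r * ENNReal.ofReal (a ^ (p-r) / (r-p))) := by
    have hb : (∫⁻ t in Ioi a, g t)
        ≤ ∫⁻ t in Ioi a, (ENNReal.ofReal p * B ^ r) * ENNReal.ofReal (t ^ (p-1-r)) := by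
      refine setLIntegral_mono (by fun_prop) fun t htt => ?_
      have ht0 : (0:ℝ) < t := ha.trans htt
      simp only [hgdef]
      have hlev' := hlev t ht0
      calc volume ({y | t ≤ σ y} ∩ Cube x l) * ENNReal.ofReal (p * t ^ (p-1))
          ≤ (B / ENNReal.ofReal t) ^ r * ENNReal.ofReal (p * t ^ (p-1)) := by gcongr
        _ = (ENNReal.ofReal p * B ^ r) * ENNReal.ofReal (t ^ (p-1-r)) := by
            rw [ENNReal.div_rpow_of_nonneg _ _ hr0.le, ENNReal.ofReal_rpow_of_pos ht0,
              ENNReal.ofReal_mul hp0.le, Real.rpow_sub ht0 (p-1) r,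
              ENNReal.ofReal_div_of_pos (Real.rpow_pos_of_pos ht0 r)]
            rw [div_eq_mul_inv, div_eq_mul_inv]
            ring
    refine hb.trans ?_
    rw [lintegral_const_mul' _ _ (ENNReal.mul_ne_top ENNReal.ofReal_ne_top
      (ENNReal.rpow_ne_top_of_nonneg hr0.le hBtop)), hJ2, mul_assoc]
  -- the key algebraic identity
  have hclaim : B ^ r * ENNReal.ofReal (a ^ (p - r) / (r - p))
      = ENNReal.ofReal c ^ r * ENNReal.ofReal (1/(r-p)) * (A ^ p * V) := by
    have hBrtop : B ^ r ≠ ⊤ := ENNReal.rpow_ne_top_of_nonneg hr0.le hBtop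
    have hL : B ^ r * ENNReal.ofReal (a ^ (p - r) / (r - p)) ≠ ⊤ :=
      ENNReal.mul_ne_top hBrtop ENNReal.ofReal_ne_top
    have hR : ENNReal.ofReal c ^ r * ENNReal.ofReal (1/(r-p)) * (A ^ p * V) ≠ ⊤ :=
      ENNReal.mul_ne_top (ENNReal.mul_ne_top
        (ENNReal.rpow_ne_top_of_nonneg hr0.le ENNReal.ofReal_ne_top) ENNReal.ofReal_ne_top)
        (ENNReal.mul_ne_top (ENNReal.rpow_ne_top_of_nonneg hp0.le hAtop) hVtop)
    refine (ENNReal.toReal_eq_toReal_iff' hL hR).1 ?_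
    set W := w.toReal with hWdef
    set VR := V.toReal with hVRdef
    have hW : 0 < W := ENNReal.toReal_pos hw0 hwtop
    have hVR : 0 < VR := ENNReal.toReal_pos hV0 hVtop
    have haWV : a = W / VR := by rw [hadef, hAdef, ENNReal.toReal_div]
    have hBR : B.toReal = c * W / VR ^ δ := by
      rw [hBdef, ENNReal.toReal_div, ENNReal.toReal_mul, ENNReal.toReal_ofReal hc.le,
        ← ENNReal.toReal_rpow]
    rw [ENNReal.toReal_mul, ENNReal.toReal_mul, ENNReal.toReal_mul, ENNReal.toReal_mul,
      ← ENNReal.toReal_rpow, ← ENNReal.toReal_rpow, ← ENNReal.toReal_rpow, hBR,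
      ENNReal.toReal_ofReal hc.le, ENNReal.toReal_ofReal (by positivity),
      ENNReal.toReal_ofReal (by positivity)]
    rw [show A.toReal = a from rfl]
    rw [haWV]
    rw [Real.div_rpow (by positivity) (by positivity),
      Real.mul_rpow hc.le hW.le, ← hVRdef]
    rw [← Real.rpow_mul hVR.le, hδr, Real.rpow_sub (by positivity : (0:ℝ) < W / VR),
      Real.div_rpow hW.le hVR.le, Real.div_rpow hW.le hVR.le, Real.rpow_sub hVR, Real.rpow_one]
    have h1 : VR ^ r ≠ 0 := by positivity
    have h2 : W ^ r ≠ 0 := by positivity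
    have h3 : r - p ≠ 0 := hrp.ne'
    have h4 : W ^ p ≠ 0 := by positivity
    have h5 : VR ^ p ≠ 0 := by positivity
    have h6 : VR ≠ 0 := hVR.ne'
    field_simp
  -- put together
  have htotal : (∫⁻ y in Cube x l, ENNReal.ofReal (σ y) ^ p) ≤ C0 * (A ^ p * V) := by
    rw [hLHS]
    have : ∫⁻ t in Ioi (0:ℝ),
        volume ({y | t ≤ σ y} ∩ Cube x l) * ENNReal.ofReal (p * t ^ (p-1))
        = ∫⁻ t in Ioi (0:ℝ), g t := rfl
    rw [this, hsplit]
    calc (∫⁻ t in Ioc (0:ℝ) a, g t) + ∫⁻ t in Ioi a, g t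
        ≤ ENNReal.ofReal p * ENNReal.ofReal (1/p) * (A ^ p * V)
          + ENNReal.ofReal p * (B ^ r * ENNReal.ofReal (a ^ (p-r) / (r-p))) :=
          add_le_add hP1 hP2
      _ = C0 * (A ^ p * V) := by rw [hclaim, hC0def]; ring
  have hmono : (V⁻¹ * ∫⁻ y in Cube x l, ENNReal.ofReal (σ y) ^ p) ^ (1/p)
      ≤ (C0 * A ^ p) ^ (1/p) := by
    refine ENNReal.rpow_le_rpow ?_ (by positivity)
    calc V⁻¹ * ∫⁻ y in Cube x l, ENNReal.ofReal (σ y) ^ p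
        ≤ V⁻¹ * (C0 * (A ^ p * V)) := mul_le_mul_right htotal _
      _ = (C0 * A ^ p) * (V⁻¹ * V) := by ring
      _ = C0 * A ^ p := by rw [ENNReal.inv_mul_cancel hV0 hVtop, mul_one]
  refine hmono.trans ?_
  rw [ENNReal.mul_rpow_of_nonneg _ _ (by positivity), ← ENNReal.rpow_mul,
    mul_one_div_cancel hp0.ne', ENNReal.rpow_one]
  rw [hAdef, ENNReal.div_eq_inv_mul]
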